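/- Let X be a metric space that is loxodromically indicable, let G be a group acting on X by isometries, and let A ≤ G be a central, finitely generated subgroup such that every non-trivial element of A acts on X as a loxodromic isometry. Then A is a direct factor of a finite-index subgroup of G. -/

import Mathlib

namespace Stmt10

open Pointwise

/-- An isometry `g` of a metric space `X` is loxodromic if for every `x ∈ X` the orbit map
`n ↦ gⁿ • x` is a quasi-isometric embedding of `ℤ` into `X`. -/
def IsLoxodromic {X : Type*} [MetricSpace X] (g : X ≃ᵢ X) : Prop :=
  ∀ x : X, ∃ L C : ℝ, 1 ≤ L ∧ 0 ≤ C ∧ ∀ m n : ℤ,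
    ((|m - n| : ℤ) : ℝ) / L - C ≤ dist ((g ^ m) x) ((g ^ n) x) ∧
    dist ((g ^ m) x) ((g ^ n) x) ≤ L * ((|m - n| : ℤ) : ℝ) + C

theorem self_mem_centralizer {G : Type*} [Group G] (g : G) :
    g ∈ Subgroup.centralizer {g} :=
  Subgroup.mem_centralizer_iff.mpr (by rintro h rfl; rfl)

/-- A metric space `X` is loxodromically indicable if for every loxodromic isometry `g` of
`X` there is a homomorphism `φ` from the centralizer of `g` in `Isom(X)` to `ℤ` with
`φ(g) ≠ 0`. -/
def LoxodromicallyIndicable (X : Type*) [MetricSpace X] : Prop :=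
  ∀ g : X ≃ᵢ X, IsLoxodromic g →
    ∃ φ : Subgroup.centralizer ({g} : Set (X ≃ᵢ X)) →* Multiplicative ℤ,
      φ ⟨g, self_mem_centralizer g⟩ ≠ 1

/-- `A` is a direct factor of a finite-index subgroup of `G`: there are a finite-index
subgroup `K ≤ G` containing `A` and a subgroup `B ≤ K` such that `A` and `B` are normal
in `K`, `A ∩ B = {1}` and `A·B = K`. -/
def IsDirectFactorOfFiniteIndexSubgroup {G : Type*} [Group G] (A : Subgroup G) : Prop :=
  ∃ K B : Subgroup G, K.FiniteIndex ∧ A ≤ K ∧ B ≤ K ∧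
    (∀ k ∈ K, ∀ a ∈ A, k * a * k⁻¹ ∈ A) ∧
    (∀ k ∈ K, ∀ b ∈ B, k * b * k⁻¹ ∈ B) ∧
    A ⊓ B = ⊥ ∧ (A : Set G) * (B : Set G) = (K : Set G)

/-- if a group `G` acts by isometries on a loxodromically indicable metric
space `X` and `A ≤ G` is a central finitely generated subgroup all of whose non-trivial
elements act as loxodromic isometries, then `A` is a direct factor of a finite-index
subgroup of `G`. -/
theorem aux_direct_factor {G : Type*} [Group G] (A : Subgroup G)
    (hcentral : A ≤ Subgroup.center G) (hfg : A.FG)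
    (hsep : ∀ a : ↥A, a ≠ 1 → ∃ f : G →* Multiplicative ℤ, f ↑a ≠ 1) :
    IsDirectFactorOfFiniteIndexSubgroup A := by
  classical
  have hsep' : ∀ a : ↥A, ∃ f : G →* Multiplicative ℤ, a ≠ 1 → f ↑a ≠ 1 := by
    intro a
    by_cases h : a = 1
    · exact ⟨1, fun h' => absurd h h'⟩
    · obtain ⟨f, hf⟩ := hsep a h
      exact ⟨f, fun _ => hf⟩
  choose F hF using hsep'
  letI : CommGroup ↥A :=
    { (inferInstance : Group ↥A) with
      mul_comm := fun x y => Subtype.ext <| by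
        simpa using (Subgroup.mem_center_iff.mp (hcentral y.2) ↑x) }
  haveI : Group.FG ↥A := (Group.fg_iff_subgroup_fg A).mpr hfg
  haveI : Module.Finite ℤ (Additive ↥A) :=
    Module.Finite.iff_addGroup_fg.mpr inferInstance
  set res : (G →* Multiplicative ℤ) → (Additive ↥A →+ ℤ) :=
    fun f => MonoidHom.toAdditiveLeft (f.comp A.subtype) with hres
  have hresapply : ∀ f (x : Additive ↥A), res f x = (f ↑(Additive.toMul x)).toAdd :=
    fun f x => rfl
  haveI : NoZeroSMulDivisors ℤ (Additive ↥A) := by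
    refine ⟨fun {n x} h => ?_⟩
    rcases eq_or_ne x 0 with rfl | hx
    · exact Or.inr rfl
    · left
      have hne : Additive.toMul x ≠ 1 := hx
      have h1 : res (F (Additive.toMul x)) (n • x) = 0 := by rw [h]; simp
      rw [map_zsmul] at h1
      have h2 : res (F (Additive.toMul x)) x ≠ 0 := by
        rw [hresapply]
        simpa using hF (Additive.toMul x) hne
      rcases smul_eq_zero.mp h1 with h | h
      · exact h
      · exact absurd h h2
  haveI : Module.Free ℤ (Additive ↥A) := Module.free_of_finite_type_torsion_free'
  set ι := Module.Free.ChooseBasisIndex ℤ (Additive ↥A) with hιdef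
  set b : Module.Basis ι ℤ (Additive ↥A) := Module.Free.chooseBasis ℤ (Additive ↥A) with hbdef
  set vec : (G →* Multiplicative ℤ) → (ι → ℚ) :=
    fun f i => ((res f (b i) : ℤ) : ℚ) with hvec
  have hspan : Submodule.span ℚ (Set.range fun a : ↥A => vec (F a)) = ⊤ := by
    by_contra hne
    obtain ⟨φ, hφ0, hφ⟩ := Submodule.exists_dual_map_eq_bot_of_lt_top
      (lt_top_iff_ne_top.mpr hne) inferInstance
    set c : ι → ℚ := fun i => φ (Pi.single i 1) with hc
    have hsingle : ∀ i : ι, (Pi.single i 1 : ι → ℚ) = fun j => if i = j then 1 else 0 :=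
      fun i => funext fun j => by simp [Pi.single_apply, eq_comm]
    have hφapp : ∀ v : ι → ℚ, φ v = ∑ i, v i * c i := by
      intro v
      rw [LinearMap.pi_apply_eq_sum_univ]
      simp only [hc, smul_eq_mul, hsingle]
    have hc0 : ∃ i, c i ≠ 0 := by
      by_contra h
      push_neg at h
      exact hφ0 (LinearMap.ext fun v => by simp [hφapp, h])
    obtain ⟨i0, hi0⟩ := hc0
    obtain ⟨m, hmne, w, hwc⟩ : ∃ m : ℤ, m ≠ 0 ∧ ∃ w : ι → ℤ,
        ∀ i, (w i : ℚ) = (m : ℚ) * c i := by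
      refine ⟨∏ i, ((c i).den : ℤ), ?_, fun i => (c i).num * ∏ j ∈ Finset.univ.erase i, ((c j).den : ℤ), ?_⟩
      · exact Finset.prod_ne_zero_iff.mpr fun i _ => Int.natCast_ne_zero.mpr (c i).den_nz
      · intro i
        have h2 : ((c i).den : ℚ) * c i = (c i).num := by
          rw [mul_comm]
          exact_mod_cast Rat.mul_den_eq_num (c i)
        push_cast
        rw [← Finset.mul_prod_erase Finset.univ (fun x => (((c x).den : ℚ)))
          (Finset.mem_univ i), mul_right_comm, h2]
    have hwne : w i0 ≠ 0 := by
      intro h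
      apply hi0
      have h3 := hwc i0
      rw [h] at h3
      push_cast at h3
      rcases mul_eq_zero.mp h3.symm with h' | h'
      · exact absurd h' (by exact_mod_cast hmne)
      · exact h'
    have hx : ∃ x : Additive ↥A, x = ∑ i, w i • b i := ⟨_, rfl⟩
    obtain ⟨x, hx⟩ := hx
    have hx0 : x ≠ 0 := fun h => hwne
      (Fintype.linearIndependent_iff.mp b.linearIndependent w (by rw [← hx, h]) i0)
    have hφvec : φ (vec (F (Additive.toMul x))) = 0 := by
      have hmem : φ (vec (F (Additive.toMul x))) ∈
          Submodule.map φ (Submodule.span ℚ (Set.range fun a : ↥A => vec (F a))) :=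
        Submodule.mem_map_of_mem (Submodule.subset_span ⟨Additive.toMul x, rfl⟩)
      rw [hφ] at hmem
      exact hmem
    have hcast : ∀ f : G →* Multiplicative ℤ,
        ((res f x : ℤ) : ℚ) = (m : ℚ) * φ (vec f) := by
      intro f
      rw [hφapp, Finset.mul_sum, hx, map_sum]
      push_cast [map_zsmul, smul_eq_mul]
      refine Finset.sum_congr rfl fun i _ => ?_
      simp only [hvec]
      rw [hwc i]
      ring
    have hcast2 := hcast (F (Additive.toMul x))
    rw [hφvec, mul_zero] at hcast2
    have hzero : res (F (Additive.toMul x)) x = 0 := by exact_mod_cast hcast2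
    rw [hresapply] at hzero
    exact hF (Additive.toMul x) hx0 (by simpa using hzero)
  obtain ⟨tset, hts, hspan2, hli⟩ :=
    exists_linearIndependent ℚ (Set.range fun a : ↥A => vec (F a))
  rw [hspan] at hspan2
  let bW : Module.Basis tset ℚ (ι → ℚ) := Module.Basis.mk hli (by rw [Subtype.range_coe, hspan2])
  let e : tset ≃ ι := bW.indexEquiv (Pi.basisFun ℚ ι)
  let bW' : Module.Basis ι ℚ (ι → ℚ) := bW.reindex e
  have hmem : ∀ i : ι, ∃ a : ↥A, vec (F a) = bW' i := by
    intro i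
    have h1 : (bW' i : ι → ℚ) ∈ tset := by
      have : bW' i = bW (e.symm i) := by rw [Module.Basis.reindex_apply]
      rw [this, Module.Basis.mk_apply]
      exact (e.symm i).2
    obtain ⟨a, ha⟩ := hts h1
    exact ⟨a, ha⟩
  choose gA hgA using hmem
  set gh : ι → (G →* Multiplicative ℤ) := fun i => F (gA i) with hgh
  set P : Matrix ι ι ℤ := Matrix.of fun i j => res (gh i) (b j) with hP
  have hPQ : P.map ((↑) : ℤ → ℚ) = Matrix.of fun i j => bW' i j := by
    ext i j
    have := congrFun (hgA i) j
    simp only [hvec] at this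
    simpa [hP, Matrix.map_apply] using this
  have hdetQ : (P.map ((↑) : ℤ → ℚ)).det ≠ 0 := by
    have h1 : P.map ((↑) : ℤ → ℚ) = Matrix.transpose ((Pi.basisFun ℚ ι).toMatrix bW') := by
      rw [hPQ]
      ext i j
      simp [Module.Basis.toMatrix_apply, Matrix.transpose_apply, Pi.basisFun_repr]
    rw [h1, Matrix.det_transpose]
    haveI := (Pi.basisFun ℚ ι).invertibleToMatrix bW'
    exact (Matrix.isUnit_det_of_invertible _).ne_zero
  have hd : P.det ≠ 0 := by
    intro h
    apply hdetQ
    have h2 : P.map ((↑) : ℤ → ℚ) = (Int.castRingHom ℚ).mapMatrix P := rfl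
    rw [h2, ← RingHom.map_det (Int.castRingHom ℚ) P, h]
    simp
  let Ψ : G →* Multiplicative (ι → ℤ) :=
    { toFun := fun y => Multiplicative.ofAdd fun i => ((gh i) y).toAdd
      map_one' := by
        have h1 : (fun i => ((gh i) (1 : G)).toAdd) = (0 : ι → ℤ) :=
          funext fun i => by simp
        simp only [h1]
        rfl
      map_mul' := fun y z => by
        have h1 : (fun i => ((gh i) (y * z)).toAdd)
            = (fun i => ((gh i) y).toAdd) + fun i => ((gh i) z).toAdd :=
          funext fun i => by simp
        simp only [h1]
        rfl }
  have hsum : ∀ v : ι → ℤ,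
      Ψ ↑(Additive.toMul (∑ j, v j • b j) : ↥A) = Multiplicative.ofAdd (P.mulVec v) := by
    intro v
    have h1 : ∀ i, res (gh i) (∑ j, v j • b j) = P.mulVec v i := by
      intro i
      rw [map_sum]
      simp only [map_zsmul, smul_eq_mul]
      simp [Matrix.mulVec, dotProduct, hP, mul_comm]
    exact congrArg Multiplicative.ofAdd (funext h1)
  have hinj : ∀ a : ↥A, Ψ ↑a = 1 → a = 1 := by
    intro a ha
    have hx : ∑ j, (b.repr (Additive.ofMul a)) j • b j = Additive.ofMul a := b.sum_repr _
    have h0 : Multiplicative.ofAdd (P.mulVec fun j => b.repr (Additive.ofMul a) j) = 1 := by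
      have h2 := hsum fun j => b.repr (Additive.ofMul a) j
      rw [hx] at h2
      exact h2.symm.trans ha
    have hvec0 : (P.mulVec fun j => b.repr (Additive.ofMul a) j) = 0 := by
      have h3 := congrArg Multiplicative.toAdd h0
      simpa using h3
    have hQ : (P.map ((↑) : ℤ → ℚ)).mulVec (fun j => ((b.repr (Additive.ofMul a) j : ℤ) : ℚ))
        = 0 := by
      ext i
      have h4 := congrFun hvec0 i
      simp only [Matrix.mulVec, dotProduct, Matrix.map_apply, Pi.zero_apply] at h4 ⊢
      exact_mod_cast h4
    have hunit : IsUnit (P.map ((↑) : ℤ → ℚ)) :=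
      (Matrix.isUnit_iff_isUnit_det _).mpr (isUnit_iff_ne_zero.mpr hdetQ)
    have hzero : (fun j => ((b.repr (Additive.ofMul a) j : ℤ) : ℚ)) = 0 :=
      Matrix.mulVec_injective_iff_isUnit.mpr hunit (by rw [hQ, Matrix.mulVec_zero])
    have hrepr : b.repr (Additive.ofMul a) = 0 := by
      ext j
      have h6 := congrFun hzero j
      rw [Pi.zero_apply] at h6
      exact_mod_cast h6
    have h5 : Additive.ofMul a = 0 := b.repr.injective (by rw [hrepr, map_zero])
    exact congrArg Additive.toMul h5
  have hpow : ∀ v : ι → ℤ, Multiplicative.ofAdd (P.det • v) ∈ A.map Ψ := by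
    intro v
    refine Subgroup.mem_map.mpr
      ⟨↑(Additive.toMul (∑ j, (P.adjugate.mulVec v) j • b j) : ↥A), SetLike.coe_mem _, ?_⟩
    rw [hsum]
    congr 1
    rw [Matrix.mulVec_mulVec, Matrix.mul_adjugate, Matrix.smul_mulVec, Matrix.one_mulVec]
  set N : Subgroup (Multiplicative (ι → ℤ)) := A.map Ψ with hN
  haveI : Module.Finite ℤ (ι → ℤ) := Module.Finite.pi
  haveI : AddGroup.FG (ι → ℤ) := Module.Finite.iff_addGroup_fg.mp inferInstance
  haveI hfinq : Finite ((Multiplicative (ι → ℤ)) ⧸ N) := by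
    apply CommGroup.finite_of_fg_torsion
    intro q
    obtain ⟨v, rfl⟩ := QuotientGroup.mk'_surjective N q
    rw [isOfFinOrder_iff_zpow_eq_one]
    refine ⟨P.det, hd, ?_⟩
    rw [← map_zpow]
    have h1 : v ^ P.det = Multiplicative.ofAdd (P.det • v.toAdd) := by
      rw [ofAdd_zsmul]
      simp
    rw [QuotientGroup.mk'_apply, QuotientGroup.eq_one_iff, h1]
    exact hpow _
  haveI : N.FiniteIndex := Subgroup.finiteIndex_of_finite_quotient (H := N)
  refine ⟨N.comap Ψ, Ψ.ker, ?_, ?_, ?_, ?_, ?_, ?_, ?_⟩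
  · constructor
    rw [Subgroup.index_comap]
    intro h0
    have hdvd : N.relIndex Ψ.range ∣ N.index :=
      Subgroup.relIndex_dvd_index_of_normal (H := N) (K := Ψ.range)
    rw [h0] at hdvd
    exact Subgroup.FiniteIndex.index_ne_zero (zero_dvd_iff.mp hdvd)
  · intro a ha
    exact Subgroup.mem_comap.mpr (Subgroup.mem_map_of_mem Ψ ha)
  · intro x hx
    have : Ψ x = 1 := hx
    exact Subgroup.mem_comap.mpr (by rw [this]; exact one_mem N)
  · intro k hk a ha
    have h1 : k * a = a * k := Subgroup.mem_center_iff.mp (hcentral ha) k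
    have h2 : k * a * k⁻¹ = a := by rw [h1, mul_assoc, mul_inv_cancel, mul_one]
    rw [h2]
    exact ha
  · intro k hk x hx
    rw [MonoidHom.mem_ker] at hx ⊢
    rw [map_mul, map_mul, hx, mul_one, map_inv, mul_inv_cancel]
  · rw [eq_bot_iff]
    intro x hx
    rw [Subgroup.mem_bot]
    have h1 : Ψ x = 1 := hx.2
    have h2 := hinj ⟨x, hx.1⟩ h1
    exact congrArg Subtype.val h2
  · ext x
    constructor
    · rintro ⟨a, ha, bb, hb, rfl⟩
      have h1 : Ψ bb = 1 := hb
      refine Subgroup.mem_comap.mpr ?_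
      rw [map_mul, h1, mul_one]
      exact Subgroup.mem_map_of_mem Ψ ha
    · intro hx
      obtain ⟨a, ha, hΨ⟩ := Subgroup.mem_map.mp (Subgroup.mem_comap.mp hx)
      refine ⟨a, ha, a⁻¹ * x, ?_, by group⟩
      have : Ψ (a⁻¹ * x) = 1 := by
        rw [map_mul, map_inv, hΨ, inv_mul_cancel]
      exact this


theorem central_loxodromic_subgroup_virtually_direct_factor
    {X : Type*} [MetricSpace X] (hX : LoxodromicallyIndicable X)
    {G : Type*} [Group G] (ρ : G →* (X ≃ᵢ X))
    (A : Subgroup G) (hcentral : A ≤ Subgroup.center G) (hfg : A.FG)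
    (hlox : ∀ a ∈ A, a ≠ 1 → IsLoxodromic (ρ a)) :
    IsDirectFactorOfFiniteIndexSubgroup A := by
  apply aux_direct_factor A hcentral hfg
  intro a ha
  have hane : (a : G) ≠ 1 := fun h => ha (Subtype.ext h)
  obtain ⟨φ, hφ⟩ := hX (ρ ↑a) (hlox ↑a a.2 hane)
  have hcomm : ∀ g : G, (ρ g) ∈ Subgroup.centralizer ({ρ ↑a} : Set (X ≃ᵢ X)) := by
    intro g
    rw [Subgroup.mem_centralizer_iff]
    intro h hh
    rw [Set.mem_singleton_iff] at hh
    subst hh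
    rw [← map_mul, ← map_mul]
    exact congrArg ρ (Subgroup.mem_center_iff.mp (hcentral a.2) g).symm
  refine ⟨φ.comp (ρ.codRestrict (Subgroup.centralizer ({ρ ↑a} : Set (X ≃ᵢ X))) hcomm), ?_⟩
  have h1 : (ρ.codRestrict (Subgroup.centralizer ({ρ ↑a} : Set (X ≃ᵢ X))) hcomm) ↑a
      = ⟨ρ ↑a, self_mem_centralizer (ρ ↑a)⟩ := Subtype.ext rfl
  simpa [MonoidHom.comp_apply, h1] using hφ

end Stmt10
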